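/- Under the faithfulness assumption, two nodes X and Y in a Bayesian network are adjacent in the DAG if and only if there is no subset Z ⊆ V \ {X, Y} such that X and Y are conditionally independent given Z. -/

import Mathlib

open scoped BigOperators
open Classical

variable {V S : Type*} [Fintype V] [DecidableEq V] [Fintype S] [DecidableEq S]

/-- `edgeOf pa a b` means there is a directed edge `a → b`, i.e. `a` is a parent of `b`. -/
def edgeOf (pa : V → Finset V) (a b : V) : Prop := a ∈ pa b

/-- The parent assignment `pa` describes a DAG: no directed cycles. -/
def AcyclicParents (pa : V → Finset V) : Prop :=
  ∀ v : V, ¬ Relation.TransGen (edgeOf pa) v v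

/-- `P` is a probability mass function over joint configurations. -/
def IsPMF (P : (V → S) → ℝ) : Prop :=
  (∀ f, 0 ≤ P f) ∧ ∑ f : V → S, P f = 1

/-- Probability of an event under `P`. -/
noncomputable def pr (P : (V → S) → ℝ) (A : (V → S) → Prop) : ℝ :=
  ∑ f : V → S, if A f then P f else 0

/-- `g` agrees with `f` on the set of nodes `Z`. -/
def agreesOn (Z : Finset V) (g f : V → S) : Prop := ∀ j ∈ Z, g j = f j

/-- Local directed Markov property: each node is conditionally independent of any
set of its non-descendants given its parent set. -/
def LocalMarkov (P : (V → S) → ℝ) (pa : V → Finset V) : Prop :=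
  ∀ (i : V) (f : V → S) (W : Finset V),
    (∀ j ∈ W, ¬ Relation.ReflTransGen (edgeOf pa) i j) →
    pr P (fun g => g i = f i ∧ agreesOn W g f ∧ agreesOn (pa i) g f) *
        pr P (fun g => agreesOn (pa i) g f) =
      pr P (fun g => g i = f i ∧ agreesOn (pa i) g f) *
        pr P (fun g => agreesOn W g f ∧ agreesOn (pa i) g f)

/-- Conditional independence of nodes `x` and `y` given the node set `Z` under `P`:
`P(X=x', Y=y', Z=z') · P(Z=z') = P(X=x', Z=z') · P(Y=y', Z=z')` for all values. -/
def CondIndepOn (P : (V → S) → ℝ) (x y : V) (Z : Finset V) : Prop :=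
  ∀ f : V → S,
    pr P (fun g => g x = f x ∧ g y = f y ∧ agreesOn Z g f) *
        pr P (fun g => agreesOn Z g f) =
      pr P (fun g => g x = f x ∧ agreesOn Z g f) *
        pr P (fun g => g y = f y ∧ agreesOn Z g f)

/-- `a` and `b` are adjacent: there is an edge between them in some direction. -/
def adjacent (pa : V → Finset V) (a b : V) : Prop := a ∈ pa b ∨ b ∈ pa a

/-- `l` is an (undirected) path from `x` to `y` in the DAG: a duplicate-free list of
vertices starting at `x`, ending at `y`, with consecutive vertices adjacent. -/
def IsPath (pa : V → Finset V) (x y : V) (l : List V) : Prop :=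
  l.Chain' (adjacent pa) ∧ l.head? = some x ∧ l.getLast? = some y ∧
    l.Nodup ∧ 2 ≤ l.length

/-- The path `l` is blocked by `Z`: some consecutive triple `a, b, c` on `l` is either
a non-collider (chain or fork) with `b ∈ Z`, or a collider `a → b ← c` with `b ∉ Z`
and no descendant of `b` in `Z`. -/
def Blocked (pa : V → Finset V) (Z : Finset V) (l : List V) : Prop :=
  ∃ a b c : V, [a, b, c] <:+: l ∧
    ((¬ (a ∈ pa b ∧ c ∈ pa b) ∧ b ∈ Z) ∨
      ((a ∈ pa b ∧ c ∈ pa b) ∧ b ∉ Z ∧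
        ∀ d, Relation.ReflTransGen (edgeOf pa) b d → d ∉ Z))

/-- `x` and `y` are d-separated by `Z`: every path between them is blocked by `Z`. -/
def DSep (pa : V → Finset V) (Z : Finset V) (x y : V) : Prop :=
  ∀ l : List V, IsPath pa x y l → Blocked pa Z l

/-- Faithfulness: conditional independence in `P` holds exactly for the triples
that are d-separated in the DAG. -/
def Faithful (P : (V → S) → ℝ) (pa : V → Finset V) : Prop :=
  ∀ (x y : V) (Z : Finset V), x ≠ y → x ∉ Z → y ∉ Z →
    (CondIndepOn P x y Z ↔ DSep pa Z x y)

lemma pr_congr (P : (V → S) → ℝ) {A B : (V → S) → Prop} (h : ∀ g, A g ↔ B g) :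
    pr P A = pr P B := by
  unfold pr
  refine Finset.sum_congr rfl fun g _ => ?_
  exact if_congr (h g) rfl rfl

lemma condIndepOn_symm {P : (V → S) → ℝ} {x y : V} {Z : Finset V}
    (h : CondIndepOn P x y Z) : CondIndepOn P y x Z := by
  intro f
  have h1 := h f
  have h2 : pr P (fun g => g y = f y ∧ g x = f x ∧ agreesOn Z g f)
      = pr P (fun g => g x = f x ∧ g y = f y ∧ agreesOn Z g f) :=
    pr_congr P (fun g => by tauto)
  rw [h2, h1, mul_comm]

/-- Key collider-finding lemma: walking from `y` along a chain of descendants,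
if the chain's endpoint `x` is not a descendant of `y`, the edge direction must
flip somewhere, producing a collider whose middle node (and its descendants)
avoid `pa y`. -/
lemma aux_collider (pa : V → Finset V) (hdag : AcyclicParents pa) (y x : V)
    (hyx : ¬ Relation.ReflTransGen (edgeOf pa) y x) :
    ∀ (t : List V) (p u : V), p ∈ pa u →
      Relation.ReflTransGen (edgeOf pa) y u →
      List.Chain' (adjacent pa) (p :: u :: t) →
      (p :: u :: t).getLast? = some x →
      ∃ a b c : V, [c, b, a] <:+: (p :: u :: t) ∧
        (a ∈ pa b ∧ c ∈ pa b) ∧ b ∉ pa y ∧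
        ∀ d, Relation.ReflTransGen (edgeOf pa) b d → d ∉ pa y := by
  intro t
  induction t with
  | nil =>
      intro p u _ hyu _ hlast
      simp only [List.getLast?_cons_cons, List.getLast?_singleton, Option.some.injEq] at hlast
      exact absurd (hlast ▸ hyu) hyx
  | cons q t ih =>
      intro p u hpu hyu hchain hlast
      rw [List.Chain', List.isChain_cons_cons] at hchain
      obtain ⟨hadj_pu, hchain⟩ := hchain
      have hadj_uq : adjacent pa u q := (List.isChain_cons_cons.mp hchain).1
      rw [List.getLast?_cons_cons] at hlast
      by_cases huq : u ∈ pa q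
      · obtain ⟨a, b, c, hinf, hc⟩ := ih u q huq (hyu.tail huq) hchain hlast
        refine ⟨a, b, c, ?_, hc⟩
        obtain ⟨s₁, s₂, hs⟩ := hinf
        exact ⟨p :: s₁, s₂, by rw [← hs]; rfl⟩
      · have hq : q ∈ pa u := hadj_uq.resolve_left huq
        refine ⟨q, u, p, ⟨[], t, rfl⟩, ⟨hq, hpu⟩, ?_, ?_⟩
        · intro huy
          exact hdag y (Relation.TransGen.tail' hyu huy)
        · intro d hud hdy
          exact hdag y (Relation.TransGen.tail' (hyu.trans hud) hdy)

lemma dsep_of_nonadj (pa : V → Finset V) (hdag : AcyclicParents pa) (x y : V)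
    (hnadj : ¬ adjacent pa x y)
    (hyx : ¬ Relation.ReflTransGen (edgeOf pa) y x) : DSep pa (pa y) x y := by
  intro l hl
  obtain ⟨hchain, hhead, hlast, _, hlen⟩ := hl
  have hrchain : List.Chain' (adjacent pa) l.reverse := by
    rw [List.Chain', List.isChain_reverse]
    exact List.IsChain.imp (fun a b h => Or.symm h) hchain
  have hrhead : l.reverse.head? = some y := by
    rw [List.head?_reverse]; exact hlast
  have hrlast : l.reverse.getLast? = some x := by
    rw [List.getLast?_reverse]; exact hhead
  have hrlen : 2 ≤ l.reverse.length := by rw [List.length_reverse]; exact hlen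
  obtain ⟨w, s, hr⟩ : ∃ w s, l.reverse = y :: w :: s := by
    match hrev : l.reverse with
    | [] => rw [hrev] at hrhead; simp at hrhead
    | [a] => rw [hrev] at hrlen; simp at hrlen
    | a :: b :: s =>
      rw [hrev] at hrhead
      simp only [List.head?_cons, Option.some.injEq] at hrhead
      subst hrhead; exact ⟨b, s, rfl⟩
  rw [hr] at hrchain hrlast
  have hadj_yw : adjacent pa y w := (List.isChain_cons_cons.mp hrchain).1
  have hinfix_of_rev : ∀ a b c : V, [c, b, a] <:+: (y :: w :: s) → [a, b, c] <:+: l := by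
    intro a b c h
    have h2 : [a, b, c].reverse <:+: l.reverse := by
      rw [hr]; exact h
    exact List.reverse_infix.mp h2
  rcases hadj_yw with hyw | hwy
  · -- y ∈ pa w : walk down descendants to find a collider
    obtain ⟨a, b, c, hinf, hcol, hbz, hdz⟩ :=
      aux_collider pa hdag y x hyx s y w hyw (Relation.ReflTransGen.single hyw) hrchain hrlast
    exact ⟨a, b, c, hinfix_of_rev a b c hinf, Or.inr ⟨hcol, hbz, hdz⟩⟩
  · -- w ∈ pa y : non-collider blocked at w (w ∈ Z = pa y)
    rcases s with _ | ⟨w2, s'⟩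
    · -- l = [w, y], so w = x and x ∈ pa y, contradicting non-adjacency
      exfalso
      simp only [List.getLast?_cons_cons, List.getLast?_singleton, Option.some.injEq] at hrlast
      exact hnadj (Or.inl (hrlast ▸ hwy))
    · refine ⟨w2, w, y, hinfix_of_rev w2 w y ⟨[], s', rfl⟩, Or.inl ⟨?_, hwy⟩⟩
      rintro ⟨-, hyw⟩
      exact hdag y ((Relation.TransGen.single hyw).tail hwy)

/-- Under faithfulness, two nodes are adjacent in the DAG iff there is no subset
`Z ⊆ V \ {x, y}` rendering them conditionally independent. -/
theorem adjacent_iff_no_separating_set (P : (V → S) → ℝ) (pa : V → Finset V)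
    (hP : IsPMF P) (hdag : AcyclicParents pa) (hfaith : Faithful P pa) :
    ∀ x y : V, x ≠ y →
      (adjacent pa x y ↔ ¬ ∃ Z : Finset V, x ∉ Z ∧ y ∉ Z ∧ CondIndepOn P x y Z) := by
  intro x y hxy
  constructor
  · rintro hadj ⟨Z, hxZ, hyZ, hci⟩
    have hds : DSep pa Z x y := (hfaith x y Z hxy hxZ hyZ).mp hci
    have hpath : IsPath pa x y [x, y] := by
      refine ⟨?_, rfl, rfl, ?_, by simp⟩
      · exact List.isChain_cons_cons.mpr ⟨hadj, List.isChain_singleton y⟩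
      · simp [hxy]
    obtain ⟨a, b, c, hinf, -⟩ := hds [x, y] hpath
    have := hinf.length_le
    simp at this
  · intro hno
    by_contra hnadj
    have hnadj' : ¬ adjacent pa y x := fun h => hnadj h.symm
    have hself : ∀ v : V, v ∉ pa v := by
      intro v hv
      exact hdag v (Relation.TransGen.single hv)
    by_cases hyx : Relation.ReflTransGen (edgeOf pa) y x
    · -- then x is not an ancestor of y; separate with pa x
      have hxy' : ¬ Relation.ReflTransGen (edgeOf pa) x y := by
        intro hxy2
        rcases hxy2.cases_head with heq | ⟨z, hxz, hzy⟩
        · exact hxy heq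
        · exact hdag x (Relation.TransGen.head' hxz (hzy.trans hyx))
      have hds : DSep pa (pa x) y x := dsep_of_nonadj pa hdag y x hnadj' hxy'
      have hyx_pa : y ∉ pa x := fun h => hnadj (Or.inr h)
      have hci : CondIndepOn P y x (pa x) :=
        (hfaith y x (pa x) hxy.symm hyx_pa (hself x)).mpr hds
      exact hno ⟨pa x, hself x, hyx_pa, condIndepOn_symm hci⟩
    · have hds : DSep pa (pa y) x y := dsep_of_nonadj pa hdag x y hnadj hyx
      have hxy_pa : x ∉ pa y := fun h => hnadj (Or.inl h)
      have hci : CondIndepOn P x y (pa y) :=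
        (hfaith x y (pa y) hxy hxy_pa (hself y)).mpr hds
      exact hno ⟨pa y, hxy_pa, hself y, hci⟩
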